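/- arXiv:1503.01397 — 2 statements merged into one kernel-verified Lean document; each statement's English description precedes it below -/
import Mathlib

section
/- The negative entropy function φ(x) = Σᵢ xᵢ log xᵢ is 1-strongly convex with respect to the ℓ1-norm over the interior of the probability simplex, i.e., for all x, y in the interior of the simplex, φ(y) ≥ φ(x) + ⟨∇φ(x), y − x⟩ + (1/2)‖y − x‖₁². -/
open Real Finset


lemma aux_hasDeriv (t : ℝ) (ht : 0 < t) :
    HasDerivAt (fun t : ℝ => (t + 1) * Real.log t - 2 * (t - 1))
      (Real.log t + 1/t - 1) t := by
  have h1 : HasDerivAt (fun t : ℝ => (t + 1) * Real.log t)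
      (1 * Real.log t + (t + 1) * t⁻¹) t :=
    ((hasDerivAt_id t).add_const 1).mul (Real.hasDerivAt_log ht.ne')
  have h2 : HasDerivAt (fun t : ℝ => 2 * (t - 1)) 2 t := by
    simpa using ((hasDerivAt_id t).sub_const 1).const_mul 2
  have := h1.sub h2
  refine this.congr_deriv ?_
  field_simp
  ring

lemma aux_mono : MonotoneOn (fun t : ℝ => (t + 1) * Real.log t - 2 * (t - 1)) (Set.Ioi 0) := by
  have hdiff : ∀ t ∈ Set.Ioi (0:ℝ),
      HasDerivAt (fun t : ℝ => (t + 1) * Real.log t - 2 * (t - 1)) (Real.log t + 1/t - 1) t :=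
    fun t ht => aux_hasDeriv t ht
  refine monotoneOn_of_deriv_nonneg (convex_Ioi 0)
    (fun t ht => (hdiff t ht).continuousAt.continuousWithinAt)
    (fun t ht => ((hdiff t (interior_subset ht)).differentiableAt.differentiableWithinAt)) ?_
  intro t ht
  rw [interior_Ioi] at ht
  rw [(aux_hasDeriv t ht).deriv]
  have := Real.one_sub_inv_le_log_of_pos ht
  rw [one_div]
  linarith

-- k ≥ 0 for t ≥ 1, k ≤ 0 for 0 < t ≤ 1
lemma aux_k_sign (t : ℝ) (ht : 0 < t) :
    (1 ≤ t → 2 * (t - 1) ≤ (t + 1) * Real.log t) ∧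
    (t ≤ 1 → (t + 1) * Real.log t ≤ 2 * (t - 1)) := by
  have h1 : (1:ℝ) ∈ Set.Ioi (0:ℝ) := by norm_num
  constructor
  · intro h
    have := aux_mono h1 (Set.mem_Ioi.2 ht) h
    simp only [Real.log_one] at this
    linarith
  · intro h
    have := aux_mono (Set.mem_Ioi.2 ht) h1 h
    simp only [Real.log_one] at this
    linarith

lemma aux_g_hasDeriv (t : ℝ) (ht : 0 < t) :
    HasDerivAt (fun t : ℝ => (2*t + 4) * (t * Real.log t - t + 1) - 3 * (t - 1)^2)
      (4 * ((t + 1) * Real.log t - 2 * (t - 1))) t := by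
  have hmul : HasDerivAt (fun t : ℝ => t * Real.log t) (1 * Real.log t + t * t⁻¹) t :=
    (hasDerivAt_id t).mul (Real.hasDerivAt_log ht.ne')
  have hin : HasDerivAt (fun t : ℝ => t * Real.log t - t + 1) (1 * Real.log t + t * t⁻¹ - 1) t :=
    (hmul.sub (hasDerivAt_id t)).add_const 1
  have hlin : HasDerivAt (fun t : ℝ => 2*t + 4) 2 t := by
    simpa using ((hasDerivAt_id t).const_mul 2).add_const 4
  have hsq : HasDerivAt (fun t : ℝ => 3 * (t - 1)^2) (3 * (2 * (t-1))) t := by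
    simpa using (((hasDerivAt_id t).sub_const 1).pow 2).const_mul 3
  have := (hlin.mul hin).sub hsq
  refine this.congr_deriv ?_
  field_simp
  ring

lemma aux_g_nonneg (t : ℝ) (ht : 0 < t) :
    3 * (t - 1)^2 ≤ (2*t + 4) * (t * Real.log t - t + 1) := by
  set g : ℝ → ℝ := fun t => (2*t + 4) * (t * Real.log t - t + 1) - 3 * (t - 1)^2 with hg
  have hg1 : g 1 = 0 := by simp [hg]
  have key : 0 ≤ g t := by
    rcases le_total 1 t with h | h
    · have hm : MonotoneOn g (Set.Ici 1) := by
        refine monotoneOn_of_deriv_nonneg (convex_Ici 1)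
          (fun s hs => (aux_g_hasDeriv s (lt_of_lt_of_le one_pos hs)).continuousAt.continuousWithinAt)
          (fun s hs => ?_) (fun s hs => ?_)
        · rw [interior_Ici] at hs
          exact (aux_g_hasDeriv s (lt_trans one_pos hs)).differentiableAt.differentiableWithinAt
        · rw [interior_Ici] at hs
          have hs0 : (0:ℝ) < s := lt_trans one_pos hs
          rw [(aux_g_hasDeriv s hs0).deriv]
          have := (aux_k_sign s hs0).1 hs.le
          linarith
      have := hm (Set.mem_Ici.2 le_rfl) (Set.mem_Ici.2 h) h
      rw [hg1] at this; exact this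
    · have hm : AntitoneOn g (Set.Ioc 0 1) := by
        refine antitoneOn_of_deriv_nonpos (convex_Ioc 0 1)
          (fun s hs => (aux_g_hasDeriv s hs.1).continuousAt.continuousWithinAt)
          (fun s hs => ?_) (fun s hs => ?_)
        · rw [interior_Ioc] at hs
          exact (aux_g_hasDeriv s hs.1).differentiableAt.differentiableWithinAt
        · rw [interior_Ioc] at hs
          rw [(aux_g_hasDeriv s hs.1).deriv]
          have := (aux_k_sign s hs.1).2 hs.2.le
          linarith
      have := hm (Set.mem_Ioc.2 ⟨ht, h⟩) (Set.mem_Ioc.2 ⟨one_pos, le_rfl⟩) h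
      rw [hg1] at this; exact this
  simp only [hg] at key
  linarith

lemma aux_ab (a b : ℝ) (ha : 0 < a) (hb : 0 < b) :
    3 * (a - b)^2 ≤ (2*a + 4*b) * (a * Real.log (a/b) - a + b) := by
  have h := aux_g_nonneg (a/b) (div_pos ha hb)
  have h2 := mul_le_mul_of_nonneg_left h (sq_nonneg b)
  have e1 : b^2 * (3 * (a/b - 1)^2) = 3 * (a - b)^2 := by
    field_simp
  have e2 : b^2 * ((2*(a/b) + 4) * ((a/b) * Real.log (a/b) - a/b + 1))
      = (2*a + 4*b) * (a * Real.log (a/b) - a + b) := by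
    field_simp
  rw [e1, e2] at h2
  exact h2

/-- The negative entropy `φ(x) = ∑ᵢ xᵢ log xᵢ` is 1-strongly convex
w.r.t. the ℓ1-norm over the interior of the probability simplex:
`φ(y) ≥ φ(x) + ⟨∇φ(x), y − x⟩ + (1/2)‖y − x‖₁²`, where `∇φ(x)ᵢ = log xᵢ + 1`. -/
theorem neg_entropy_strongly_convex_l1 (n : ℕ)
    (x y : Fin n → ℝ)
    (hx_pos : ∀ i, 0 < x i) (hx_sum : ∑ i, x i = 1)
    (hy_pos : ∀ i, 0 < y i) (hy_sum : ∑ i, y i = 1) :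
    (∑ i, y i * Real.log (y i)) ≥
      (∑ i, x i * Real.log (x i))
      + (∑ i, (Real.log (x i) + 1) * (y i - x i))
      + (1 / 2) * (∑ i, |y i - x i|) ^ 2 := by
  set D : Fin n → ℝ := fun i => y i * Real.log (y i / x i) - y i + x i with hD
  set w : Fin n → ℝ := fun i => (2 * y i + 4 * x i) / 6 with hw
  have hwpos : ∀ i ∈ Finset.univ, 0 < w i := fun i _ => by
    have := hx_pos i; have := hy_pos i
    simp only [hw]; positivity
  -- identity
  have hid : ∑ i, D i = (∑ i, y i * Real.log (y i)) - (∑ i, x i * Real.log (x i))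
      - (∑ i, (Real.log (x i) + 1) * (y i - x i)) := by
    rw [← Finset.sum_sub_distrib, ← Finset.sum_sub_distrib]
    refine Finset.sum_congr rfl fun i _ => ?_
    simp only [hD]
    rw [Real.log_div (hy_pos i).ne' (hx_pos i).ne']
    ring
  -- sum of weights is 1
  have hwsum : ∑ i, w i = 1 := by
    have h6 : ∑ i, (2 * y i + 4 * x i) = 6 := by
      rw [Finset.sum_add_distrib, ← Finset.mul_sum, ← Finset.mul_sum, hx_sum, hy_sum]
      norm_num
    rw [hw, ← Finset.sum_div, h6]
    norm_num
  -- Cauchy-Schwarz / Sedrakyan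
  have hcs := Finset.sq_sum_div_le_sum_sq_div Finset.univ (fun i => |y i - x i|) hwpos
  rw [hwsum, div_one] at hcs
  -- pointwise bound
  have hpt : ∀ i ∈ Finset.univ, |y i - x i| ^ 2 / w i ≤ 2 * D i := by
    intro i _
    have hab := aux_ab (y i) (x i) (hy_pos i) (hx_pos i)
    rw [sq_abs, div_le_iff₀ (hwpos i (Finset.mem_univ i))]
    simp only [hD, hw]
    nlinarith [hab]
  have hsum : ∑ i, |y i - x i| ^ 2 / w i ≤ ∑ i, 2 * D i := Finset.sum_le_sum hpt
  rw [← Finset.mul_sum] at hsum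
  have : (∑ i, |y i - x i|) ^ 2 ≤ 2 * ∑ i, D i := le_trans hcs hsum
  linarith [hid ▸ this]
end

section
/- Let f be convex with L-Lipschitz gradient on a compact convex set X with Bregman diameter D² = max_{x∈X} B_φ(x, x₀) for prox-center x₀ and 1-strongly convex φ. Then the accelerated dual-averaging iterates with weights c_t = 2/(t+1) achieve f(μ_t) − min_{x∈X} f(x) ≤ 4LD²/t². -/
open RealInnerProductSpace

private lemma adv_line_deriv {E : Type*} [NormedAddCommGroup E] [InnerProductSpace ℝ E]
    [CompleteSpace E] (f : E → ℝ) (gf : E → E) (hf_grad : ∀ x, HasGradientAt f (gf x) x)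
    (x y : E) (s₀ : ℝ) :
    HasDerivAt (fun s : ℝ => f (x + s • (y - x))) ⟪gf (x + s₀ • (y - x)), y - x⟫ s₀ := by
  have hl : HasDerivAt (fun s : ℝ => x + s • (y - x)) (y - x) s₀ := by
    simpa using ((hasDerivAt_id s₀).smul_const (y - x)).const_add x
  simpa [InnerProductSpace.toDual_apply_apply, Function.comp_def] using
    ((hf_grad (x + s₀ • (y - x))).hasFDerivAt).comp_hasDerivAt s₀ hl

private lemma adv_cvx_grad {E : Type*} [NormedAddCommGroup E] [InnerProductSpace ℝ E]
    [CompleteSpace E] (X : Set E) (f : E → ℝ) (gf : E → E)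
    (hf_conv : ConvexOn ℝ X f) (hf_grad : ∀ x, HasGradientAt f (gf x) x)
    (x : E) (hx : x ∈ X) (y : E) (hy : y ∈ X) :
    f x + ⟪gf x, y - x⟫ ≤ f y := by
  have h0 : HasDerivAt (fun s : ℝ => f (x + s • (y - x))) ⟪gf x, y - x⟫ 0 := by
    simpa using adv_line_deriv f gf hf_grad x y 0
  have hslope := hasDerivAt_iff_tendsto_slope.mp h0
  have hsub : (nhdsWithin (0:ℝ) (Set.Ioi 0)) ≤ (nhdsWithin (0:ℝ) {(0:ℝ)}ᶜ) :=
    nhdsWithin_mono 0 (fun s hs => ne_of_gt hs)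
  have hslope' := hslope.mono_left hsub
  have hev : ∀ᶠ s in nhdsWithin (0:ℝ) (Set.Ioi 0),
      slope (fun s : ℝ => f (x + s • (y - x))) 0 s ≤ f y - f x := by
    filter_upwards [Ioo_mem_nhdsGT_of_mem (Set.left_mem_Ico.mpr one_pos)] with s hs
    have hs0 : 0 < s := hs.1
    have hmemp : x + s • (y - x) = (1 - s) • x + s • y := by module
    have hcv := hf_conv.2 hx hy (by linarith [hs.2] : (0:ℝ) ≤ 1 - s) hs0.le (by ring)
    rw [slope_def_field]
    have : f (x + s • (y - x)) ≤ (1 - s) * f x + s * f y := by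
      rw [hmemp]; simpa [smul_eq_mul] using hcv
    rw [div_le_iff₀ (by simpa using hs0)]
    simp only [zero_smul, add_zero, sub_zero]
    nlinarith
  linarith [le_of_tendsto hslope' hev]

private lemma adv_descent {E : Type*} [NormedAddCommGroup E] [InnerProductSpace ℝ E]
    [CompleteSpace E] (f : E → ℝ) (gf : E → E) (Lip : ℝ)
    (hf_grad : ∀ x, HasGradientAt f (gf x) x)
    (hf_lip : ∀ x y, ‖gf x - gf y‖ ≤ Lip * ‖x - y‖) (x y : E) :
    f y ≤ f x + ⟪gf x, y - x⟫ + Lip / 2 * ‖y - x‖ ^ 2 := by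
  set F : ℝ → ℝ := fun s => Lip / 2 * s ^ 2 * ‖y - x‖ ^ 2 + s * ⟪gf x, y - x⟫ + f x
    - f (x + s • (y - x)) with hF
  have hFd : ∀ s : ℝ, HasDerivAt F
      (Lip * s * ‖y - x‖ ^ 2 + ⟪gf x, y - x⟫ - ⟪gf (x + s • (y - x)), y - x⟫) s := by
    intro s
    have h1 : HasDerivAt (fun s : ℝ => Lip / 2 * s ^ 2 * ‖y - x‖ ^ 2 + s * ⟪gf x, y - x⟫ + f x)
        (Lip * s * ‖y - x‖ ^ 2 + ⟪gf x, y - x⟫) s := by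
      have : HasDerivAt (fun s : ℝ => Lip / 2 * s ^ 2 * ‖y - x‖ ^ 2 + s * ⟪gf x, y - x⟫ + f x)
          (Lip / 2 * (2 * s) * ‖y - x‖ ^ 2 + 1 * ⟪gf x, y - x⟫ + 0) s := by
        apply HasDerivAt.add_const
        exact ((((hasDerivAt_pow 2 s).const_mul (Lip/2)).mul_const _).add
          ((hasDerivAt_id s).mul_const _)).congr_deriv (by ring)
      exact this.congr_deriv (by ring)
    exact h1.sub (adv_line_deriv f gf hf_grad x y s)
  have hmono : MonotoneOn F (Set.Icc (0:ℝ) 1) := by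
    apply monotoneOn_of_deriv_nonneg (convex_Icc 0 1)
    · exact fun s _ => (hFd s).differentiableAt.continuousAt.continuousWithinAt
    · exact fun s _ => ((hFd s).differentiableAt).differentiableWithinAt
    · intro s hs
      rw [interior_Icc] at hs
      rw [(hFd s).deriv]
      have hcs : ⟪gf (x + s • (y - x)) - gf x, y - x⟫ ≤ ‖gf (x + s • (y - x)) - gf x‖ * ‖y - x‖ :=
        real_inner_le_norm _ _
      have hlip := hf_lip (x + s • (y - x)) x
      have hnorm : ‖x + s • (y - x) - x‖ = s * ‖y - x‖ := by
        rw [show x + s • (y - x) - x = s • (y - x) by module, norm_smul]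
        simp [abs_of_nonneg hs.1.le]
      rw [hnorm] at hlip
      have hsplit : ⟪gf (x + s • (y - x)) - gf x, y - x⟫
          = ⟪gf (x + s • (y - x)), y - x⟫ - ⟪gf x, y - x⟫ := inner_sub_left _ _ _
      nlinarith [norm_nonneg (y - x), norm_nonneg (gf (x + s • (y - x)) - gf x),
        mul_le_mul_of_nonneg_right hlip (norm_nonneg (y - x))]
  have h01 := hmono (Set.left_mem_Icc.mpr zero_le_one) (Set.right_mem_Icc.mpr zero_le_one)
    zero_le_one
  have hF0 : F 0 = 0 := by simp [hF]
  have hF1 : F 1 = Lip / 2 * ‖y - x‖ ^ 2 + ⟪gf x, y - x⟫ + f x - f y := by simp [hF]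
  rw [hF0, hF1] at h01
  linarith

private lemma adv_strong_min {E : Type*} [NormedAddCommGroup E] [InnerProductSpace ℝ E]
    [CompleteSpace E] (X : Set E) (hX : Convex ℝ X) (φ : E → ℝ) (gφ : E → E) (G x₀ : E)
    (β : ℝ) (hβ : 0 < β)
    (hφ_sc : ∀ x y, φ y ≥ φ x + ⟪gφ x, y - x⟫ + 1 / 2 * ‖y - x‖ ^ 2)
    (N : E) (hN : N ∈ X)
    (hmin : IsMinOn (fun z => ⟪G, z⟫ + β * (φ z - φ x₀ - ⟪gφ x₀, z - x₀⟫)) X N)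
    (y : E) (hy : y ∈ X) :
    (⟪G, N⟫ + β * (φ N - φ x₀ - ⟪gφ x₀, N - x₀⟫)) + β / 2 * ‖y - N‖ ^ 2
      ≤ ⟪G, y⟫ + β * (φ y - φ x₀ - ⟪gφ x₀, y - x₀⟫) := by
  set ψ : E → ℝ := fun z => ⟪G, z⟫ + β * (φ z - φ x₀ - ⟪gφ x₀, z - x₀⟫) with hψ
  have key : ∀ l : ℝ, l ∈ Set.Ioo (0:ℝ) 1 →
      β / 2 * (1 - l) * ‖y - N‖ ^ 2 ≤ ψ y - ψ N := by
    intro l hl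
    set m : E := l • y + (1 - l) • N with hm
    have hmX : m ∈ X := hX hy hN hl.1.le (by linarith [hl.2]) (by ring)
    have h1 := hφ_sc m y
    have h2 := hφ_sc m N
    have hym : y - m = (1 - l) • (y - N) := by rw [hm]; module
    have hNm : N - m = (-l) • (y - N) := by rw [hm]; module
    have hn1 : ‖y - m‖ ^ 2 = (1 - l) ^ 2 * ‖y - N‖ ^ 2 := by
      rw [hym, norm_smul, Real.norm_eq_abs, abs_of_nonneg (by linarith [hl.2] : (0:ℝ) ≤ 1 - l)]
      ring
    have hn2 : ‖N - m‖ ^ 2 = l ^ 2 * ‖y - N‖ ^ 2 := by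
      rw [hNm, norm_smul, Real.norm_eq_abs, abs_neg, abs_of_nonneg hl.1.le]; ring
    have hz : l * ⟪gφ m, y - m⟫ + (1 - l) * ⟪gφ m, N - m⟫ = 0 := by
      rw [hym, hNm, real_inner_smul_right, real_inner_smul_right]; ring
    have haff : ⟪gφ x₀, m - x₀⟫ = l * ⟪gφ x₀, y - x₀⟫ + (1 - l) * ⟪gφ x₀, N - x₀⟫ := by
      rw [show m - x₀ = l • (y - x₀) + (1 - l) • (N - x₀) by rw [hm]; module]
      rw [inner_add_right, real_inner_smul_right, real_inner_smul_right]
    have hGm : ⟪G, m⟫ = l * ⟪G, y⟫ + (1 - l) * ⟪G, N⟫ := by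
      rw [hm, inner_add_right, real_inner_smul_right, real_inner_smul_right]
    have hφm : φ m ≤ l * φ y + (1 - l) * φ N - 1 / 2 * l * (1 - l) * ‖y - N‖ ^ 2 := by
      rw [hn1] at h1; rw [hn2] at h2
      nlinarith [mul_le_mul_of_nonneg_left h1 hl.1.le,
        mul_le_mul_of_nonneg_left h2 (by linarith [hl.2] : (0:ℝ) ≤ 1 - l)]
    have hmin' : ψ N ≤ ψ m := isMinOn_iff.mp hmin m hmX
    have hψm : ψ m ≤ l * ψ y + (1 - l) * ψ N - β / 2 * l * (1 - l) * ‖y - N‖ ^ 2 := by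
      simp only [hψ]
      rw [hGm, haff]
      nlinarith [hφm]
    have hchain := hmin'.trans hψm
    have hkey : l * (β / 2 * (1 - l) * ‖y - N‖ ^ 2) ≤ l * (ψ y - ψ N) := by nlinarith [hchain]
    exact le_of_mul_le_mul_left hkey hl.1
  have hlim : Filter.Tendsto (fun l : ℝ => β / 2 * (1 - l) * ‖y - N‖ ^ 2)
      (nhdsWithin 0 (Set.Ioo (0:ℝ) 1)) (nhds (β / 2 * ‖y - N‖ ^ 2)) := by
    have hc : Continuous (fun l : ℝ => β / 2 * (1 - l) * ‖y - N‖ ^ 2) :=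
      (continuous_const.mul (continuous_const.sub continuous_id)).mul continuous_const
    have := hc.tendsto 0
    simpa using this.mono_left nhdsWithin_le_nhds
  have hne : (nhdsWithin (0:ℝ) (Set.Ioo 0 1)).NeBot := by
    apply mem_closure_iff_nhdsWithin_neBot.mp
    rw [closure_Ioo one_ne_zero.symm]
    exact Set.left_mem_Icc.mpr zero_le_one
  have hev : ∀ᶠ l in nhdsWithin (0:ℝ) (Set.Ioo 0 1),
      β / 2 * (1 - l) * ‖y - N‖ ^ 2 ≤ ψ y - ψ N :=
    Filter.eventually_of_mem self_mem_nhdsWithin key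
  have hfin := le_of_tendsto hlim hev
  have hgN : ψ N = ⟪G, N⟫ + β * (φ N - φ x₀ - ⟪gφ x₀, N - x₀⟫) := rfl
  have hgy : ψ y = ⟪G, y⟫ + β * (φ y - φ x₀ - ⟪gφ x₀, y - x₀⟫) := rfl
  linarith [hfin]

set_option maxHeartbeats 1000000 in
/-- Accelerated dual averaging, Xiao 2010 Cor. 7: with
`c_t = 2/(t+1)`, `u_t = (1−c_t)μ_{t−1} + c_t ν_{t−1}`,
`ḡ_t = (1−c_t)ḡ_{t−1} + c_t ∇f(u_t)`,
`ν_t = argmin_{x∈X} ⟨ḡ_t, x⟩ + (4L/(t(t+1))) B_φ(x, x₀)`,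
`μ_t = (1−c_t)μ_{t−1} + c_t ν_t`, for `f` convex with `L`-Lipschitz gradient on
a compact convex `X` with Bregman diameter `D² = max_{x∈X} B_φ(x, x₀)` for a
1-strongly convex `φ`, we get `f(μ_t) − min_{x∈X} f ≤ 4 L D² / t²`. -/
theorem accelerated_dual_averaging_rate
    {E : Type*} [NormedAddCommGroup E] [InnerProductSpace ℝ E] [CompleteSpace E]
    (X : Set E) (hXc : IsCompact X) (hX : Convex ℝ X)
    (f φ : E → ℝ) (gf gφ : E → E) (Lip D : ℝ) (hLip : 0 < Lip) (hD : 0 ≤ D)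
    (hf_conv : ConvexOn ℝ X f)
    (hf_grad : ∀ x, HasGradientAt f (gf x) x)
    (hf_lip : ∀ x y, ‖gf x - gf y‖ ≤ Lip * ‖x - y‖)
    (hφ_grad : ∀ x, HasGradientAt φ (gφ x) x)
    (hφ_sc : ∀ x y, φ y ≥ φ x + ⟪gφ x, y - x⟫ + 1 / 2 * ‖y - x‖ ^ 2)
    (x₀ : E) (hx₀ : x₀ ∈ X)
    -- Bregman diameter: D² = max_{x ∈ X} B_φ(x, x₀)
    (hDdiam : ∀ x ∈ X, φ x - φ x₀ - ⟪gφ x₀, x - x₀⟫ ≤ D ^ 2)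
    (μ ν u gbar : ℕ → E)
    (hμ0 : μ 0 = x₀) (hν0 : ν 0 = x₀) (hg0 : gbar 0 = 0)
    (hu : ∀ t : ℕ, u (t + 1) =
      (1 - 2 / ((t + 1 : ℝ) + 1)) • μ t + (2 / ((t + 1 : ℝ) + 1)) • ν t)
    (hg : ∀ t : ℕ, gbar (t + 1) =
      (1 - 2 / ((t + 1 : ℝ) + 1)) • gbar t + (2 / ((t + 1 : ℝ) + 1)) • gf (u (t + 1)))
    (hν : ∀ t : ℕ, ν (t + 1) ∈ X ∧
      IsMinOn (fun z => ⟪gbar (t + 1), z⟫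
          + (4 * Lip / ((t + 1 : ℝ) * ((t + 1 : ℝ) + 1)))
            * (φ z - φ x₀ - ⟪gφ x₀, z - x₀⟫))
        X (ν (t + 1)))
    (hμ : ∀ t : ℕ, μ (t + 1) =
      (1 - 2 / ((t + 1 : ℝ) + 1)) • μ t + (2 / ((t + 1 : ℝ) + 1)) • ν (t + 1))
    (xstar : E) (hxstar : xstar ∈ X) (hxstar_min : IsMinOn f X xstar) :
    ∀ t : ℕ, 1 ≤ t → f (μ t) - f xstar ≤ 4 * Lip * D ^ 2 / (t : ℝ) ^ 2 := by
  -- coefficient facts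
  have hcpos : ∀ t : ℕ, 0 < 2 / ((t : ℝ) + 1 + 1) := by
    intro t; positivity
  have hcle : ∀ t : ℕ, 2 / ((t : ℝ) + 1 + 1) ≤ 1 := by
    intro t
    rw [div_le_one (by positivity)]
    have : (0:ℝ) ≤ (t:ℝ) := Nat.cast_nonneg t
    linarith
  -- memberships
  have hmem : ∀ t : ℕ, μ t ∈ X ∧ ν t ∈ X := by
    intro t
    induction t with
    | zero => exact ⟨hμ0 ▸ hx₀, hν0 ▸ hx₀⟩
    | succ t ih =>
      refine ⟨?_, (hν t).1⟩
      rw [hμ t]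
      exact hX ih.1 (hν t).1 (by linarith [hcle t]) (hcpos t).le (by ring)
  have humem : ∀ t : ℕ, u (t + 1) ∈ X := by
    intro t
    rw [hu t]
    exact hX (hmem t).1 (hmem t).2 (by linarith [hcle t]) (hcpos t).le (by ring)
  -- scalar sequences
  set AA : ℕ → ℝ := fun n => (n : ℝ) * ((n : ℝ) + 1) / 2 with hAAdef
  set CC : ℕ → ℝ := fun n => ∑ s ∈ Finset.range n,
    ((s : ℝ) + 1) * (f (u (s + 1)) - ⟪gf (u (s + 1)), u (s + 1)⟫) with hCCdef
  set Ψ : ℕ → E → ℝ := fun n x =>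
    AA n * ⟪gbar n, x⟫ + CC n + 2 * Lip * (φ x - φ x₀ - ⟪gφ x₀, x - x₀⟫) with hΨdef
  have hA0 : AA 0 = 0 := by simp [hAAdef]
  have hC0 : CC 0 = 0 := by simp [hCCdef]
  have hAnonneg : ∀ t : ℕ, 0 ≤ AA t := by intro t; simp only [hAAdef]; positivity
  have hA1 : ∀ t : ℕ, AA (t + 1) = ((t : ℝ) + 1) * ((t : ℝ) + 1 + 1) / 2 := by
    intro t; simp only [hAAdef]; push_cast; ring
  have hAadd : ∀ t : ℕ, AA (t + 1) = AA t + ((t : ℝ) + 1) := by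
    intro t; simp only [hAAdef]; push_cast; ring
  have hc1 : ∀ t : ℕ, (1 - 2 / ((t : ℝ) + 1 + 1)) * AA (t + 1) = AA t := by
    intro t
    have h2 : ((t:ℝ) + 1 + 1) ≠ 0 := by positivity
    simp only [hAAdef]; push_cast; field_simp; ring
  have hc2 : ∀ t : ℕ, (2 / ((t : ℝ) + 1 + 1)) * AA (t + 1) = (t : ℝ) + 1 := by
    intro t
    have h2 : ((t:ℝ) + 1 + 1) ≠ 0 := by positivity
    simp only [hAAdef]; push_cast; field_simp
  have hCrec : ∀ t : ℕ, CC (t + 1) = CC t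
      + ((t : ℝ) + 1) * (f (u (t + 1)) - ⟪gf (u (t + 1)), u (t + 1)⟫) := by
    intro t
    simp only [hCCdef, Finset.sum_range_succ]
  -- inner expansion of gbar recursion
  have hgx : ∀ (t : ℕ) (x : E), AA (t + 1) * ⟪gbar (t + 1), x⟫
      = AA t * ⟪gbar t, x⟫ + ((t : ℝ) + 1) * ⟪gf (u (t + 1)), x⟫ := by
    intro t x
    rw [hg t, inner_add_left, real_inner_smul_left, real_inner_smul_left]
    linear_combination (⟪gbar t, x⟫ : ℝ) * hc1 t + (⟪gf (u (t + 1)), x⟫ : ℝ) * hc2 t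
  -- BB at x₀ is 0
  have hBx₀ : φ x₀ - φ x₀ - ⟪gφ x₀, x₀ - x₀⟫ = 0 := by simp
  -- strong minimality of ν t for Ψ t
  have hstrong : ∀ t : ℕ, ∀ y ∈ X, Ψ t (ν t) + Lip * ‖y - ν t‖ ^ 2 ≤ Ψ t y := by
    intro t y hy
    cases t with
    | zero =>
      simp only [hΨdef, hA0, hC0, hν0, hBx₀, zero_mul, zero_add, add_zero, mul_zero]
      nlinarith [hφ_sc x₀ y]
    | succ t =>
      have hβ : (0:ℝ) < 4 * Lip / (((t:ℝ) + 1) * (((t:ℝ) + 1) + 1)) := by positivity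
      have hkey := adv_strong_min X hX φ gφ (gbar (t+1)) x₀ _ hβ hφ_sc (ν (t+1)) (hν t).1
        (hν t).2 y hy
      have hAnn := hAnonneg (t + 1)
      have hmul := mul_le_mul_of_nonneg_left hkey hAnn
      have hβA : AA (t + 1) * (4 * Lip / (((t:ℝ) + 1) * (((t:ℝ) + 1) + 1))) = 2 * Lip := by
        rw [hA1 t]
        have h2 : ((t:ℝ) + 1) * ((t:ℝ) + 1 + 1) ≠ 0 := by positivity
        field_simp
        ring
      set β := 4 * Lip / (((t:ℝ) + 1) * (((t:ℝ) + 1) + 1)) with hβdef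
      have eq1 : AA (t+1) * ((⟪gbar (t+1), ν (t+1)⟫
            + β * (φ (ν (t+1)) - φ x₀ - ⟪gφ x₀, ν (t+1) - x₀⟫))
            + β / 2 * ‖y - ν (t+1)‖ ^ 2)
          = AA (t+1) * ⟪gbar (t+1), ν (t+1)⟫
            + 2 * Lip * (φ (ν (t+1)) - φ x₀ - ⟪gφ x₀, ν (t+1) - x₀⟫)
            + Lip * ‖y - ν (t+1)‖ ^ 2 := by
        linear_combination ((φ (ν (t+1)) - φ x₀ - ⟪gφ x₀, ν (t+1) - x₀⟫ : ℝ)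
          + ‖y - ν (t+1)‖ ^ 2 / 2) * hβA
      have eq2 : AA (t+1) * (⟪gbar (t+1), y⟫ + β * (φ y - φ x₀ - ⟪gφ x₀, y - x₀⟫))
          = AA (t+1) * ⟪gbar (t+1), y⟫ + 2 * Lip * (φ y - φ x₀ - ⟪gφ x₀, y - x₀⟫) := by
        linear_combination ((φ y - φ x₀ - ⟪gφ x₀, y - x₀⟫ : ℝ)) * hβA
      simp only [hΨdef]
      linarith [hmul, eq1, eq2]
  -- main induction
  have hmain : ∀ t : ℕ, AA t * f (μ t) ≤ Ψ t (ν t)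
      ∧ ∀ x ∈ X, AA t * ⟪gbar t, x⟫ + CC t ≤ AA t * f x := by
    intro t
    induction t with
    | zero =>
      constructor
      · simp only [hΨdef, hA0, hC0, hν0, hBx₀, zero_mul, zero_add, add_zero, mul_zero]
        norm_num
      · intro x _; simp [hA0, hC0]
    | succ t ih =>
      obtain ⟨ih1, ih2⟩ := ih
      have hνX := (hν t).1
      have huX := humem t
      have hμX := (hmem t).1
      have hμ'X := (hmem (t+1)).1
      -- notation
      have hcv := adv_cvx_grad X f gf hf_conv hf_grad (u (t+1)) huX (μ t) hμX
      have hcvx2 := adv_cvx_grad X f gf hf_conv hf_grad (u (t+1)) huX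
      have hdesc := adv_descent f gf Lip hf_grad hf_lip (u (t+1)) (μ (t+1))
      -- vector identities
      have hvd : μ (t+1) - u (t+1) = (2 / ((t:ℝ) + 1 + 1)) • (ν (t+1) - ν t) := by
        rw [hμ t, hu t]; module
      have he1 : ⟪gf (u (t+1)), μ (t+1) - u (t+1)⟫
          = (2 / ((t:ℝ) + 1 + 1)) * (⟪gf (u (t+1)), ν (t+1)⟫ - ⟪gf (u (t+1)), ν t⟫) := by
        rw [hvd, real_inner_smul_right, inner_sub_right]
      have he2 : ‖μ (t+1) - u (t+1)‖ ^ 2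
          = (2 / ((t:ℝ) + 1 + 1)) ^ 2 * ‖ν (t+1) - ν t‖ ^ 2 := by
        rw [hvd, norm_smul, Real.norm_eq_abs, abs_of_nonneg (hcpos t).le]; ring
      have hvu : AA (t+1) • u (t+1) = AA t • μ t + ((t:ℝ) + 1) • ν t := by
        rw [hu t, smul_add, smul_smul, smul_smul, mul_comm (AA (t+1)), mul_comm (AA (t+1)),
          hc1 t, hc2 t]
      have hiu : AA (t+1) * ⟪gf (u (t+1)), u (t+1)⟫
          = AA t * ⟪gf (u (t+1)), μ t⟫ + ((t:ℝ) + 1) * ⟪gf (u (t+1)), ν t⟫ := by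
        have := congrArg (fun z => ⟪gf (u (t+1)), z⟫) hvu
        simpa [inner_add_right, real_inner_smul_right] using this
      -- descent step, scaled
      have hA1nn := hAnonneg (t+1)
      rw [he1, he2] at hdesc
      have hd2 := mul_le_mul_of_nonneg_left hdesc hA1nn
      have hexp : AA (t+1) * (f (u (t+1))
            + (2 / ((t:ℝ) + 1 + 1)) * (⟪gf (u (t+1)), ν (t+1)⟫ - ⟪gf (u (t+1)), ν t⟫)
            + Lip / 2 * ((2 / ((t:ℝ) + 1 + 1)) ^ 2 * ‖ν (t+1) - ν t‖ ^ 2))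
          = AA (t+1) * f (u (t+1))
            + ((t:ℝ) + 1) * ⟪gf (u (t+1)), ν (t+1)⟫ - ((t:ℝ) + 1) * ⟪gf (u (t+1)), ν t⟫
            + Lip / 2 * ((2 / ((t:ℝ) + 1 + 1)) * ((t:ℝ) + 1)) * ‖ν (t+1) - ν t‖ ^ 2 := by
        linear_combination ((⟪gf (u (t+1)), ν (t+1)⟫ - ⟪gf (u (t+1)), ν t⟫ : ℝ)
          + Lip / 2 * (2 / ((t:ℝ) + 1 + 1)) * ‖ν (t+1) - ν t‖ ^ 2) * hc2 t
      have hca : (2 / ((t:ℝ) + 1 + 1)) * ((t:ℝ) + 1) ≤ 2 := by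
        rw [div_mul_eq_mul_div, div_le_iff₀ (by positivity)]
        linarith [Nat.cast_nonneg (α := ℝ) t]
      have hfrac2 : Lip / 2 * ((2 / ((t:ℝ) + 1 + 1)) * ((t:ℝ) + 1)) * ‖ν (t+1) - ν t‖ ^ 2
          ≤ Lip * ‖ν (t+1) - ν t‖ ^ 2 := by
        have h := mul_le_mul_of_nonneg_right
          (mul_le_mul_of_nonneg_left hca (by positivity : (0:ℝ) ≤ Lip / 2))
          (sq_nonneg ‖ν (t+1) - ν t‖)
        linarith [h]
      have hstar : AA (t+1) * f (μ (t+1)) ≤ AA (t+1) * f (u (t+1))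
          + ((t:ℝ) + 1) * ⟪gf (u (t+1)), ν (t+1)⟫ - ((t:ℝ) + 1) * ⟪gf (u (t+1)), ν t⟫
          + Lip * ‖ν (t+1) - ν t‖ ^ 2 := by
        rw [hexp] at hd2
        linarith [hd2, hfrac2]
      -- strong minimality and induction hypothesis
      have hs := hstrong t (ν (t+1)) hνX
      -- convexity at u, evaluated at μ t, scaled by AA t
      rw [inner_sub_right] at hcv
      have hcv' := mul_le_mul_of_nonneg_left hcv (hAnonneg t)
      -- Ψ recursion at ν (t+1)
      have hΨr : Ψ (t+1) (ν (t+1)) = Ψ t (ν (t+1))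
          + ((t:ℝ) + 1) * (f (u (t+1)) + ⟪gf (u (t+1)), ν (t+1)⟫
            - ⟪gf (u (t+1)), u (t+1)⟫) := by
        simp only [hΨdef]
        rw [hgx t (ν (t+1)), hCrec t]
        ring
      have hmulfu : AA (t+1) * f (u (t+1))
          = AA t * f (u (t+1)) + ((t:ℝ) + 1) * f (u (t+1)) := by rw [hAadd t]; ring
      have hmulgu : AA (t+1) * ⟪gf (u (t+1)), u (t+1)⟫
          = AA t * ⟪gf (u (t+1)), u (t+1)⟫ + ((t:ℝ) + 1) * ⟪gf (u (t+1)), u (t+1)⟫ := by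
        rw [hAadd t]; ring
      constructor
      · linarith [hΨr, hs, ih1, hcv', hiu, hstar, hmulfu, hmulgu]
      · intro x hx
        have hcvx := hcvx2 x hx
        rw [inner_sub_right] at hcvx
        have hcvx' := mul_le_mul_of_nonneg_left hcvx
          (by positivity : (0:ℝ) ≤ (t:ℝ) + 1)
        have hlin := ih2 x hx
        have hmulfx : AA (t+1) * f x = AA t * f x + ((t:ℝ) + 1) * f x := by
          rw [hAadd t]; ring
        rw [hgx t x, hCrec t]
        linarith [hcvx', hlin, hmulfx]
  -- conclusion
  intro t ht
  have ht1 : (1:ℝ) ≤ (t:ℝ) := by exact_mod_cast ht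
  have hApos : 0 < AA t := by
    simp only [hAAdef]
    nlinarith
  obtain ⟨h1, h2⟩ := hmain t
  have hsx := hstrong t xstar hxstar
  have hlin := h2 xstar hxstar
  have hBd := hDdiam xstar hxstar
  have hΨx : Ψ t xstar = AA t * ⟪gbar t, xstar⟫ + CC t
      + 2 * Lip * (φ xstar - φ x₀ - ⟪gφ x₀, xstar - x₀⟫) := rfl
  have hB2 : 2 * Lip * (φ xstar - φ x₀ - ⟪gφ x₀, xstar - x₀⟫) ≤ 2 * Lip * D ^ 2 :=
    mul_le_mul_of_nonneg_left hBd (by positivity)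
  have hK : (0:ℝ) ≤ Lip * ‖xstar - ν t‖ ^ 2 := by positivity
  have hmain2 : AA t * f (μ t) ≤ AA t * f xstar + 2 * Lip * D ^ 2 := by
    linarith [h1, hsx, hlin, hB2, hK, hΨx]
  have h3 : f (μ t) - f xstar ≤ 2 * Lip * D ^ 2 / AA t := by
    rw [le_div_iff₀ hApos]
    linarith [hmain2]
  have h4 : 2 * Lip * D ^ 2 / AA t ≤ 4 * Lip * D ^ 2 / (t : ℝ) ^ 2 := by
    rw [div_le_div_iff₀ hApos (by positivity)]
    have hint : (0:ℝ) ≤ Lip * D ^ 2 * (t:ℝ) :=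
      mul_nonneg (mul_nonneg hLip.le (sq_nonneg D)) (Nat.cast_nonneg t)
    simp only [hAAdef]
    ring_nf
    nlinarith [hint]
  linarith
end
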